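/- arXiv:1804.03241 — 3 statements merged into one kernel-verified Lean document; each statement's English description precedes it below -/
import Mathlib

section
/- A simplicial set morphism f : X → Y is a weak homotopy equivalence if and only if f^op : X^op → Y^op is a weak homotopy equivalence, where (−)^op is the involution of simplicial sets induced by the unique nontrivial automorphism of the simplex category Δ. -/
open CategoryTheory Opposite

namespace ThmA

/-! ### Weak homotopy equivalences of simplicial sets -/

/-- A map of topological spaces is a homotopy equivalence. -/
def TopIsHEquiv {X Y : TopCat} (f : X ⟶ Y) : Prop :=
  ∃ g : Y ⟶ X, ContinuousMap.Homotopic (f ≫ g).hom (𝟙 X : X ⟶ X).hom ∧ ContinuousMap.Homotopic (g ≫ f).hom (𝟙 Y : Y ⟶ Y).hom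

/-- A morphism of simplicial sets is a weak homotopy equivalence if its topological
realization is a homotopy equivalence. -/
noncomputable def IsWeakEquiv {X Y : SSet} (f : X ⟶ Y) : Prop := TopIsHEquiv (SSet.toTop.map f)

/-- The terminal simplicial set (a constant presheaf with point value). -/
def sTerminal : SSet := (Functor.const _).obj PUnit

def toTerminal (X : SSet) : X ⟶ sTerminal where
  app _ := TypeCat.ofHom fun _ => PUnit.unit
  naturality _ _ _ := rfl

/-- A simplicial set is weakly contractible if the map to the terminal simplicial set is a
weak homotopy equivalence. -/
noncomputable def IsWeaklyContractible (X : SSet) : Prop := IsWeakEquiv (toTerminal X)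

/-! ### The involution of `Δ` and opposite simplicial sets -/

/-- The unique nontrivial automorphism of the simplex category: the identity on objects,
sending `f : [m] ⟶ [n]` to `i ↦ n - f(m - i)`. -/
def Dfun : SimplexCategory ⥤ SimplexCategory where
  obj x := x
  map {x y} f := SimplexCategory.Hom.mk
    ⟨fun i => (f.toOrderHom i.rev).rev, by
      intro i j hij
      exact Fin.rev_le_rev.mpr (f.toOrderHom.monotone (Fin.rev_le_rev.mpr hij))⟩
  map_id x := by
    apply SimplexCategory.Hom.ext
    apply OrderHom.ext
    funext i
    show ((SimplexCategory.Hom.toOrderHom (𝟙 x)) i.rev).rev = _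
    simp [Fin.rev_rev]
  map_comp {x y z} f g := by
    apply SimplexCategory.Hom.ext
    apply OrderHom.ext
    funext i
    show ((f ≫ g).toOrderHom i.rev).rev = _
    rw [SimplexCategory.comp_toOrderHom]
    show (g.toOrderHom (f.toOrderHom i.rev)).rev
        = (g.toOrderHom ((f.toOrderHom i.rev).rev).rev).rev
    rw [Fin.rev_rev]

/-- The opposite simplicial set `X^op = X ∘ D`. -/
def opSSet (X : SSet) : SSet := Dfun.op ⋙ X

/-- The opposite of a morphism of simplicial sets. -/
def opSSetMap {X Y : SSet} (f : X ⟶ Y) : opSSet X ⟶ opSSet Y := Functor.whiskerLeft _ f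


/-! ### Auxiliary material for the proof -/

section Aux

open SimplexCategory NNReal

theorem Dfun_Dfun {x y : SimplexCategory} (f : x ⟶ y) : Dfun.map (Dfun.map f) = f := by
  apply SimplexCategory.Hom.ext
  apply OrderHom.ext
  funext i
  show ((Dfun.map f).toOrderHom i.rev).rev = _
  show ((f.toOrderHom i.rev.rev).rev).rev = _
  simp [Fin.rev_rev]
  rfl

def flipFun (x : SimplexCategory) (g : stdSimplex ℝ (Fin (x.len + 1))) :
    stdSimplex ℝ (Fin (x.len + 1)) :=
  ⟨fun i => g.1 (Fin.rev i), fun i => g.2.1 _, by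
    have h := g.2.2
    refine Eq.trans ?_ h
    exact Fintype.sum_equiv (Fin.revPerm : Fin (x.len + 1) ≃ Fin (x.len + 1)) _ _ (fun i => rfl)⟩

noncomputable def flipCM (x : SimplexCategory) : SimplexCategory.toTop.obj x ⟶ SimplexCategory.toTop.obj x :=
  TopCat.ofHom ⟨fun g => ULift.up (flipFun x g.down), by
    apply continuous_uliftUp.comp
    apply Continuous.subtype_mk
    exact continuous_pi fun i =>
      (continuous_apply _).comp (continuous_subtype_val.comp continuous_uliftDown)⟩

theorem flip_flip (x : SimplexCategory) : flipCM x ≫ flipCM x = 𝟙 _ := by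
  ext g
  apply ULift.ext
  apply Subtype.ext
  funext i
  show g.down.1 (Fin.rev (Fin.rev i)) = _
  rw [Fin.rev_rev]
  rfl

theorem flip_natural {x y : SimplexCategory} (f : x ⟶ y) :
    SimplexCategory.toTop.map f ≫ flipCM y
      = flipCM x ≫ SimplexCategory.toTop.map (Dfun.map f) := by
  classical
  ext g
  apply ULift.ext
  apply Subtype.ext
  funext i
  show FunOnFinite.linearMap ℝ ℝ (⇑f.toOrderHom) (g.down.1 : Fin (x.len + 1) → ℝ) i.rev
    = FunOnFinite.linearMap ℝ ℝ (⇑(Dfun.map f).toOrderHom)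
      ((flipFun x g.down).1 : Fin (x.len + 1) → ℝ) i
  rw [FunOnFinite.linearMap_apply_apply]
  erw [FunOnFinite.linearMap_apply_apply]
  rw [Finset.sum_filter]
  erw [Finset.sum_filter]
  refine Fintype.sum_equiv (Fin.revPerm : Fin (x.len + 1) ≃ Fin (x.len + 1)) _ _ (fun j => ?_)
  simp only [Fin.revPerm_apply]
  have h1 : (Dfun.map f).toOrderHom (Fin.rev j) = Fin.rev (f.toOrderHom j) := by
    show Fin.rev (f.toOrderHom (Fin.rev (Fin.rev j))) = _
    rw [Fin.rev_rev]
  have h2 : (flipFun x g.down).1 (Fin.rev j) = g.down.1 j := by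
    show g.down.1 (Fin.rev (Fin.rev j)) = _
    rw [Fin.rev_rev]
  exact if_congr ⟨fun h => h1.trans (by rw [h, Fin.rev_rev]),
    fun h => by rw [← h1.symm.trans h, Fin.rev_rev]⟩ h2.symm rfl

/-- Flip as a natural isomorphism `Dfun ⋙ toTop ≅ toTop`. -/
noncomputable def flipNatIso : Dfun ⋙ SimplexCategory.toTop ≅ SimplexCategory.toTop :=
  NatIso.ofComponents (fun x => ⟨flipCM x, flipCM x, flip_flip x, flip_flip x⟩)
    (fun {x y} f => by
      show SimplexCategory.toTop.map (Dfun.map f) ≫ flipCM y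
          = flipCM x ≫ SimplexCategory.toTop.map f
      have := flip_natural (Dfun.map f)
      rwa [Dfun_Dfun] at this)

/-- Precomposition with `Dfun.op` as a functor `SSet ⥤ SSet`. -/
def OpF : SSet ⥤ SSet := (Functor.whiskeringLeft _ _ (Type _)).obj Dfun.op

/-- The involution equivalence on `SSet`. -/
def OpEq : SSet ≌ SSet := by
  refine CategoryTheory.Equivalence.mk OpF OpF ?_ ?_
  · exact NatIso.ofComponents (fun X => NatIso.ofComponents (fun n => Iso.refl _)
      (fun {n m} φ => by
        dsimp [OpF]
        show X.map φ = X.map ((Dfun.map (Dfun.map φ.unop)).op)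
        rw [Dfun_Dfun]
        rfl)) (fun {X Y} f => by
        ext n x
        rfl)
  · exact NatIso.ofComponents (fun X => NatIso.ofComponents (fun n => Iso.refl _)
      (fun {n m} φ => by
        dsimp [OpF]
        show X.map ((Dfun.map (Dfun.map φ.unop)).op) = X.map φ
        rw [Dfun_Dfun]
        rfl)) (fun {X Y} f => by
        ext n x
        rfl)

/-- The natural isomorphism `toSSet ⋙ OpF ≅ toSSet`. -/
noncomputable def singOpIso : TopCat.toSSet ⋙ OpF ≅ TopCat.toSSet :=
  NatIso.ofComponents
    (fun Y => (Functor.isoWhiskerRight (NatIso.op flipNatIso) (uliftYoneda.{0}.obj Y)).symm)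
    (fun {Y Z} h => by
      ext n ⟨g⟩
      apply ULift.ext
      show (flipNatIso.hom.app _ ≫ g) ≫ h = flipNatIso.hom.app _ ≫ (g ≫ h)
      rw [Category.assoc])

/-- The geometric realization of the opposite simplicial set is naturally isomorphic to
the geometric realization. -/
noncomputable def realOpIso : OpF ⋙ SSet.toTop ≅ SSet.toTop :=
  Adjunction.leftAdjointUniq
    ((OpEq.toAdjunction.comp sSetTopAdj).ofNatIsoRight singOpIso) sSetTopAdj

theorem topIsHEquiv_of_iso {X Y X' Y' : TopCat} (i : X' ≅ X) (j : Y' ≅ Y)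
    (f : X ⟶ Y) (f' : X' ⟶ Y') (h : f' ≫ j.hom = i.hom ≫ f) :
    TopIsHEquiv f → TopIsHEquiv f' := by
  rintro ⟨g, h1, h2⟩
  have hf' : f' = i.hom ≫ f ≫ j.inv := by
    rw [← Category.assoc, ← h, Category.assoc, j.hom_inv_id, Category.comp_id]
  refine ⟨j.hom ≫ g ≫ i.inv, ?_, ?_⟩
  · have e : f' ≫ j.hom ≫ g ≫ i.inv = i.hom ≫ (f ≫ g) ≫ i.inv := by
      rw [hf']; simp
    rw [e]
    have H : ContinuousMap.Homotopic (i.hom ≫ (f ≫ g) ≫ i.inv).hom (i.hom ≫ 𝟙 X ≫ i.inv).hom :=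
      ContinuousMap.Homotopic.comp
        (ContinuousMap.Homotopic.comp (ContinuousMap.Homotopic.refl _) h1)
        (ContinuousMap.Homotopic.refl _)
    simpa using H
  · have e : (j.hom ≫ g ≫ i.inv) ≫ f' = j.hom ≫ (g ≫ f) ≫ j.inv := by
      rw [hf']; simp
    rw [e]
    have H : ContinuousMap.Homotopic (j.hom ≫ (g ≫ f) ≫ j.inv).hom (j.hom ≫ 𝟙 Y ≫ j.inv).hom :=
      ContinuousMap.Homotopic.comp
        (ContinuousMap.Homotopic.comp (ContinuousMap.Homotopic.refl _) h2)
        (ContinuousMap.Homotopic.refl _)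
    simpa using H

end Aux

/-- a morphism of simplicial sets is a weak homotopy equivalence if and only if
its opposite is. -/
theorem isWeakEquiv_op_iff {X Y : SSet} (f : X ⟶ Y) :
    IsWeakEquiv f ↔ IsWeakEquiv (opSSetMap f) := by
  constructor
  · intro hf
    exact topIsHEquiv_of_iso (realOpIso.app X) (realOpIso.app Y) (SSet.toTop.map f)
      (SSet.toTop.map (opSSetMap f)) (realOpIso.hom.naturality f) hf
  · intro hf
    exact topIsHEquiv_of_iso (realOpIso.app X).symm (realOpIso.app Y).symm
      (SSet.toTop.map (opSSetMap f)) (SSet.toTop.map f) (realOpIso.inv.naturality f) hf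

end ThmA
end

section
/- Let (C, ⋆, ∅) be a monoidal category whose unit ∅ is an initial object and which is locally left closed. For every object Z of C, the assignment (T, z : T → Z) ↦ Z/z extends to a functor from the opposite of the over-category C/Z to C; moreover, applying this functor to the morphism ∅ → X over Z (for any g : X → Z) and using the canonical isomorphism Z/(∅ → Z) ≅ Z yields a 'forgetful' morphism U : Z/g → Z, and the slice functor lifts along the forgetful functor to a functor (C/Z)^op → C/Z. -/
open CategoryTheory MonoidalCategory Limits

universe v u

noncomputable section

namespace MonA

variable {C : Type u} [Category.{v} C] [MonoidalCategory C]

/-- When the monoidal unit is an initial object `∅`, the canonical morphism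
`ι₁ : X ⟶ X ⋆ Y` (with `⋆` the monoidal product). -/
def iota1 (hI : IsInitial (𝟙_ C)) (X Y : C) : X ⟶ X ⊗ Y :=
  (ρ_ X).inv ≫ (X ◁ hI.to Y)

theorem iota1_natural (hI : IsInitial (𝟙_ C)) {X X' : C} (f : X ⟶ X') (Y : C) :
    iota1 hI X Y ≫ (f ▷ Y) = f ≫ iota1 hI X' Y := by
  dsimp [iota1]
  rw [Category.assoc, whisker_exchange, ← Category.assoc, ← rightUnitor_inv_naturality,
    Category.assoc]

/-- The functor `Y ↦ (X ⋆ Y, ι₁)` from `C` to the under-category `X/C`. -/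
def underJoin (hI : IsInitial (𝟙_ C)) (T : C) : C ⥤ Under T where
  obj Y := Under.mk (iota1 hI T Y)
  map {Y Y'} f := Under.homMk (T ◁ f) (by
    dsimp [iota1]
    rw [Category.assoc, ← MonoidalCategory.whiskerLeft_comp]
    congr 2
    exact hI.hom_ext _ _)

section
variable (hI : IsInitial (𝟙_ C)) (slice : ∀ T : C, Under T ⥤ C)
  (adj : ∀ T : C, underJoin hI T ⊣ slice T)

/-- The evaluation (counit) map `T ⋆ (Z/g) ⟶ Z` of the slice adjunction, for an object
`(T, g : T ⟶ Z)` of `C/Z`. -/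
def epsMap {Z : C} (w : Over Z) :
    w.left ⊗ (slice w.left).obj (Under.mk w.hom) ⟶ Z :=
  ((adj w.left).counit.app (Under.mk w.hom)).right

/-- The forgetful morphism `U : Z/g ⟶ Z`, obtained by applying the slice functor to
`∅ ⟶ T` over `Z` and using the canonical isomorphism `Z/(∅ → Z) ≅ Z`. -/
def forgetU {Z : C} (w : Over Z) : (slice w.left).obj (Under.mk w.hom) ⟶ Z :=
  (λ_ _).inv ≫ (hI.to w.left ▷ _) ≫ epsMap hI slice adj w

/-- Compatibility of the composite `(l.left ▷ _) ≫ eps₂` with the under-structure maps. -/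
theorem mapHom_w {Z : C} {w₁ w₂ : Over Z} (l : w₁ ⟶ w₂) :
    iota1 hI w₁.left ((slice w₂.left).obj (Under.mk w₂.hom))
      ≫ ((l.left ▷ _) ≫ epsMap hI slice adj w₂) = w₁.hom := by
  have h₂ := Under.w ((adj w₂.left).counit.app (Under.mk w₂.hom))
  have hn := iota1_natural hI l.left ((slice w₂.left).obj (Under.mk w₂.hom))
  dsimp [underJoin, epsMap] at *
  rw [← Category.assoc, hn, Category.assoc, h₂, Over.w]

/-- The action of the slice functor on morphisms of `C/Z`. -/
def mapHom {Z : C} {w₁ w₂ : Over Z} (l : w₁ ⟶ w₂) :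
    (slice w₂.left).obj (Under.mk w₂.hom) ⟶ (slice w₁.left).obj (Under.mk w₁.hom) :=
  ((adj w₁.left).homEquiv _ (Under.mk w₁.hom))
    (Under.homMk ((l.left ▷ _) ≫ epsMap hI slice adj w₂) (mapHom_w hI slice adj l))

theorem mapHom_mate {Z : C} {w₁ w₂ : Over Z} (l : w₁ ⟶ w₂) :
    (w₁.left ◁ mapHom hI slice adj l) ≫ epsMap hI slice adj w₁
      = (l.left ▷ _) ≫ epsMap hI slice adj w₂ := by
  have h0 : (((adj w₁.left).homEquiv _ (Under.mk w₁.hom))).symm (mapHom hI slice adj l)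
      = Under.homMk ((l.left ▷ _) ≫ epsMap hI slice adj w₂) (mapHom_w hI slice adj l) := by
    rw [mapHom]; exact Equiv.symm_apply_apply _ _
  rw [Adjunction.homEquiv_counit] at h0
  have h := congrArg CommaMorphism.right h0
  dsimp [underJoin, epsMap] at h ⊢
  exact h

theorem mapHom_unique {Z : C} (w : Over Z) {S : C}
    (f g : S ⟶ (slice w.left).obj (Under.mk w.hom))
    (h : (w.left ◁ f) ≫ epsMap hI slice adj w = (w.left ◁ g) ≫ epsMap hI slice adj w) :
    f = g := by
  apply ((adj w.left).homEquiv _ _).symm.injective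
  rw [Adjunction.homEquiv_counit, Adjunction.homEquiv_counit]
  ext
  simpa [underJoin, epsMap] using h

/-- let `(C, ⋆, ∅)` be a monoidal category whose unit `∅` is initial, locally
left closed (the local closedness being given by the functors `slice T : T/C ⥤ C` right
adjoint to `Y ↦ (T ⋆ Y, ι₁)`).  For every object `Z`, the assignment
`(T, z : T ⟶ Z) ↦ Z/z := (slice T).obj (T, z)` extends to a functor `F : (C/Z)ᵒᵖ ⥤ C` — whose
action on morphisms is the one determined by the adjunctions, i.e. characterized by the mate
equation below — and this functor lifts along the forgetful functor, via the forgetful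
morphisms `U : Z/z ⟶ Z`, to a functor `(C/Z)ᵒᵖ ⥤ C/Z`. -/
theorem slice_functor_exists (Z : C) :
    ∃ (F : (Over Z)ᵒᵖ ⥤ C)
      (hobj : ∀ w : Over Z, F.obj (Opposite.op w) = (slice w.left).obj (Under.mk w.hom)),
      (∀ {w₁ w₂ : Over Z} (l : w₁ ⟶ w₂),
        (w₁.left ◁ (eqToHom (hobj w₂).symm ≫ F.map l.op ≫ eqToHom (hobj w₁)))
            ≫ epsMap hI slice adj w₁
          = (l.left ▷ ((slice w₂.left).obj (Under.mk w₂.hom))) ≫ epsMap hI slice adj w₂) ∧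
      ∃ (F' : (Over Z)ᵒᵖ ⥤ Over Z) (hcomm : F' ⋙ Over.forget Z = F),
        ∀ w : Over Z, (F'.obj (Opposite.op w)).hom
          = eqToHom ((Functor.congr_obj hcomm (Opposite.op w)).trans (hobj w))
            ≫ forgetU hI slice adj w := by
  have map_id : ∀ w : Over Z, mapHom hI slice adj (𝟙 w) = 𝟙 _ := by
    intro w
    apply mapHom_unique hI slice adj w
    simp [mapHom_mate hI slice adj (𝟙 w)]
  have map_comp : ∀ {w₁ w₂ w₃ : Over Z} (l : w₁ ⟶ w₂) (m : w₂ ⟶ w₃),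
      mapHom hI slice adj (l ≫ m) = mapHom hI slice adj m ≫ mapHom hI slice adj l := by
    intro w₁ w₂ w₃ l m
    apply mapHom_unique hI slice adj w₁
    rw [mapHom_mate hI slice adj (l ≫ m), MonoidalCategory.whiskerLeft_comp, Category.assoc,
      mapHom_mate hI slice adj l, ← Category.assoc, whisker_exchange, Category.assoc,
      mapHom_mate hI slice adj m, ← Category.assoc, ← comp_whiskerRight]
    rfl
  let F : (Over Z)ᵒᵖ ⥤ C :=
    { obj := fun X => (slice X.unop.left).obj (Under.mk X.unop.hom)
      map := fun f => mapHom hI slice adj f.unop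
      map_id := fun X => map_id X.unop
      map_comp := fun f g => map_comp g.unop f.unop }
  have hforget : ∀ {w₁ w₂ : Over Z} (l : w₁ ⟶ w₂),
      mapHom hI slice adj l ≫ forgetU hI slice adj w₁ = forgetU hI slice adj w₂ := by
    intro w₁ w₂ l
    dsimp [forgetU]
    rw [← Category.assoc, leftUnitor_inv_naturality, Category.assoc,
      ← Category.assoc (𝟙_ C ◁ mapHom hI slice adj l), whisker_exchange, Category.assoc,
      mapHom_mate hI slice adj l, ← Category.assoc (hI.to w₁.left ▷ _), ← comp_whiskerRight,
      hI.hom_ext (hI.to w₁.left ≫ l.left) (hI.to w₂.left)]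
  refine ⟨F, fun w => rfl, fun {w₁ w₂} l => by simpa [F] using mapHom_mate hI slice adj l, ?_⟩
  refine ⟨{ obj := fun X => Over.mk (forgetU hI slice adj X.unop)
            map := fun f => Over.homMk (mapHom hI slice adj f.unop) (hforget f.unop)
            map_id := fun X => by ext; exact map_id X.unop
            map_comp := fun f g => by ext; exact map_comp g.unop f.unop }, rfl, fun w => by simp; exact (Category.id_comp _).symm⟩

end

end MonA

end
end

section
/- For the category of small categories Cat with the categorical join ⋆, the induced slice functoriality for vertices is an isomorphism: for any functor v : A → C and any m-simplex c of the nerve of C (a chain c₀ → c₁ → ⋯ → c_m in C), the induced functor c\A → c_m\A (restriction along the inclusion of the last vertex [0] → [m]) is an isomorphism of categories. -/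
open CategoryTheory

universe v u

namespace SliceA

variable {A : Type u} [Category.{v} A] {C : Type u} [Category.{v} C]

/-- The slice `c\A` of a functor `v : A ⥤ C` under an `m`-simplex `c` of the nerve of `C`
(a chain `c₀ → ⋯ → c_m`), as given by the join adjunction: objects are objects `a` of `A`
together with a compatible extension of the chain `c` by `v(a)`, i.e. a cocone of `c` with
vertex `v(a)`. -/
structure ChainSlice (v : A ⥤ C) {m : ℕ} (c : ComposableArrows C m) where
  pt : A
  arr : ∀ i : Fin (m + 1), c.obj i ⟶ v.obj pt
  comm : ∀ (i j : Fin (m + 1)) (hij : i ≤ j), c.map (homOfLE hij) ≫ arr j = arr i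

/-- Morphisms in the slice `c\A`. -/
@[ext]
structure ChainSliceHom {v : A ⥤ C} {m : ℕ} {c : ComposableArrows C m}
    (x y : ChainSlice v c) where
  hom : x.pt ⟶ y.pt
  w : ∀ i : Fin (m + 1), x.arr i ≫ v.map hom = y.arr i

instance (v : A ⥤ C) {m : ℕ} (c : ComposableArrows C m) : Category (ChainSlice v c) where
  Hom := ChainSliceHom
  id x := ⟨𝟙 x.pt, fun i => by simp⟩
  comp f g := ⟨f.hom ≫ g.hom, fun i => by
    rw [Functor.map_comp, ← Category.assoc, f.w, g.w]⟩
  id_comp f := by apply ChainSliceHom.ext; simp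
  comp_id f := by apply ChainSliceHom.ext; simp
  assoc f g h := by apply ChainSliceHom.ext; simp

/-- The restriction functor `c\A ⥤ c_m\A` induced by the inclusion of the last vertex
`[0] ⟶ [m]`. -/
def restrictLast (v : A ⥤ C) {m : ℕ} (c : ComposableArrows C m) :
    ChainSlice v c ⥤ ChainSlice v (ComposableArrows.mk₀ (c.obj (Fin.last m))) where
  obj x :=
    { pt := x.pt
      arr := fun _ => x.arr (Fin.last m)
      comm := by
        intro i j hij
        have hi := i.isLt
        have hj := j.isLt
        obtain rfl : i = j := Fin.ext (by omega)
        rw [show (homOfLE hij : i ⟶ i) = 𝟙 i from Subsingleton.elim _ _]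
        simp
        exact Category.id_comp _ }
  map f := ⟨f.hom, fun _ => f.w _⟩
  map_id x := by apply ChainSliceHom.ext; rfl
  map_comp f g := by apply ChainSliceHom.ext; rfl

lemma ChainSlice.ext' {v : A ⥤ C} {m : ℕ} {c : ComposableArrows C m}
    {p : A} {a a' : ∀ i : Fin (m + 1), c.obj i ⟶ v.obj p} {h h'}
    (ha : a = a') :
    (ChainSlice.mk p a h : ChainSlice v c) = ChainSlice.mk p a' h' := by
  subst ha; rfl

lemma eqToHom_hom {v : A ⥤ C} {m : ℕ} {c : ComposableArrows C m}
    {x y : ChainSlice v c} (h : x = y) :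
    (eqToHom h).hom = eqToHom (congrArg ChainSlice.pt h) := by
  subst h; rfl

/-- The inverse functor `c_m\A ⥤ c\A`. -/
def extendLast (v : A ⥤ C) {m : ℕ} (c : ComposableArrows C m) :
    ChainSlice v (ComposableArrows.mk₀ (c.obj (Fin.last m))) ⥤ ChainSlice v c where
  obj x :=
    { pt := x.pt
      arr := fun i => c.map (homOfLE i.le_last) ≫ x.arr 0
      comm := by
        intro i j hij
        erw [← Category.assoc, ← c.map_comp, homOfLE_comp] }
  map f := ⟨f.hom, fun i => by erw [Category.assoc, f.w]⟩
  map_id x := by apply ChainSliceHom.ext; rfl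
  map_comp f g := by apply ChainSliceHom.ext; rfl

/-- for `Cat` with the categorical join, the slice functoriality along the
last-vertex inclusion `[0] ⟶ [m]` is an isomorphism of categories: for any functor
`v : A ⥤ C` and any `m`-simplex `c` of the nerve of `C`, the induced functor
`c\A ⥤ c_m\A` is an isomorphism of categories. -/
theorem restrictLast_isIso (v : A ⥤ C) {m : ℕ} (c : ComposableArrows C m) :
    ∃ H : ChainSlice v (ComposableArrows.mk₀ (c.obj (Fin.last m))) ⥤ ChainSlice v c,
      restrictLast v c ⋙ H = 𝟭 _ ∧ H ⋙ restrictLast v c = 𝟭 _ := by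
  refine ⟨extendLast v c, ?_, ?_⟩
  · have hobj : ∀ x, (restrictLast v c ⋙ extendLast v c).obj x = (𝟭 _).obj x := by
      rintro ⟨p, a, h⟩
      exact ChainSlice.ext' (funext fun i => h i (Fin.last m) i.le_last)
    refine CategoryTheory.Functor.ext hobj (fun x y f => ?_)
    apply ChainSliceHom.ext
    show f.hom = (eqToHom (hobj x)).hom ≫ f.hom ≫ (eqToHom (hobj y).symm).hom
    rw [eqToHom_hom, eqToHom_hom]
    simp
    erw [eqToHom_refl, eqToHom_refl, Category.id_comp, Category.comp_id]
  · have hobj : ∀ x, (extendLast v c ⋙ restrictLast v c).obj x = (𝟭 _).obj x := by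
      rintro ⟨p, a, h⟩
      refine ChainSlice.ext' (funext fun i => ?_)
      obtain rfl : i = 0 := Fin.ext (by omega)
      show c.map (homOfLE (Fin.last m).le_last) ≫ a 0 = a 0
      erw [show homOfLE (Fin.last m).le_last = 𝟙 (Fin.last m) from rfl, c.map_id,
        Category.id_comp]
    refine CategoryTheory.Functor.ext hobj (fun x y f => ?_)
    apply ChainSliceHom.ext
    show f.hom = (eqToHom (hobj x)).hom ≫ f.hom ≫ (eqToHom (hobj y).symm).hom
    rw [eqToHom_hom, eqToHom_hom]
    simp
    erw [eqToHom_refl, eqToHom_refl, Category.id_comp, Category.comp_id]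

end SliceA
end
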